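/- Let $\pi, \sigma \in \mathfrak{C}_n$ with $\pi \leftrightsquigarrow \sigma$ via cut points $k < \ell$ and cycle notation $1\mapsto p_2 \mapsto \cdots \mapsto p_n \mapsto 1$ for $\pi$. Then $\pi^{-1}\sigma$ is the 3-cycle $(p_k\, p_\ell\, p_n)$ (mapping $p_k \mapsto p_\ell \mapsto p_n \mapsto p_k$), fixing all other points. -/
import Mathlib


open Matrix

/-- `π` is an `n`-cycle: a cycle whose support is all of `Fin n`. -/
def IsNCycle {n : ℕ} (π : Equiv.Perm (Fin n)) : Prop :=
  π.IsCycle ∧ π.support = Finset.univ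

/-- The suffix-shift relation with explicit cut points `k < ℓ`.  Writing the cycle of `π`
as `p 1 = 0, p 2, …, p n` with `p i = π^(i-1) 0`, the permutation `σ` maps
`p i ↦ p (i+1)` for `i ∉ {k, ℓ, n}`, while `p k ↦ p (ℓ+1)`, `p ℓ ↦ p 1` and
`p n ↦ p (k+1)`; i.e. the suffix `p (k+1), …, p n` of the cycle is cyclically shifted. -/
def shiftRelAt {n : ℕ} [NeZero n] (π σ : Equiv.Perm (Fin n)) (k ℓ : ℕ) : Prop :=
  1 ≤ k ∧ k < ℓ ∧ ℓ < n ∧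
  (∀ i, 1 ≤ i → i < n → i ≠ k → i ≠ ℓ →
      σ ((π ^ (i - 1)) (0 : Fin n)) = (π ^ i) (0 : Fin n)) ∧
  σ ((π ^ (k - 1)) (0 : Fin n)) = (π ^ ℓ) (0 : Fin n) ∧
  σ ((π ^ (ℓ - 1)) (0 : Fin n)) = (0 : Fin n) ∧
  σ ((π ^ (n - 1)) (0 : Fin n)) = (π ^ k) (0 : Fin n)

/-- The suffix-shift relation `π ⟷ σ` on `n`-cycles. -/
def shiftRel {n : ℕ} [NeZero n] (π σ : Equiv.Perm (Fin n)) : Prop :=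
  ∃ k ℓ : ℕ, shiftRelAt π σ k ℓ

attribute [local instance] Classical.propDecidable

/-- The adversary matrix `Γ` on `n`-cycles: `Γ[π, σ] = 1` if `π ⟷ σ` and `0` otherwise. -/
noncomputable def gammaMat (n : ℕ) [NeZero n] :
    Matrix {π : Equiv.Perm (Fin n) // IsNCycle π} {π : Equiv.Perm (Fin n) // IsNCycle π} ℝ :=
  Matrix.of fun π σ => if shiftRel π.1 σ.1 then 1 else 0

/-- If `π ⟷ σ` via cut points `k < ℓ`, then `π⁻¹ * σ` is the 3-cycle
`(p k, p ℓ, p n)` mapping `p k ↦ p ℓ ↦ p n ↦ p k` and fixing all other points,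
where `p i = π^(i-1) 0`. -/
theorem shiftRelAt_inv_mul (n : ℕ) [NeZero n] (π σ : Equiv.Perm (Fin n))
    (hπ : IsNCycle π) (hσ : IsNCycle σ) (k ℓ : ℕ) (h : shiftRelAt π σ k ℓ) :
    π⁻¹ * σ =
      Equiv.swap ((π ^ (k - 1)) (0 : Fin n)) ((π ^ (n - 1)) (0 : Fin n)) *
        Equiv.swap ((π ^ (k - 1)) (0 : Fin n)) ((π ^ (ℓ - 1)) (0 : Fin n)) := by
  obtain ⟨hk1, hkl, hln, hgen, hkσ, hlσ, hnσ⟩ := h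
  have hn1 : 1 ≤ n := Nat.one_le_iff_ne_zero.2 (NeZero.ne n)
  have horder : orderOf π = n := by
    rw [hπ.1.orderOf, hπ.2, Finset.card_univ, Fintype.card_fin]
  have hpow : π ^ n = 1 := by have t := pow_orderOf_eq_one π; rwa [horder] at t
  have hfix : ∀ y : Fin n, π y ≠ y := by
    intro y
    rw [← Equiv.Perm.mem_support, hπ.2]
    exact Finset.mem_univ y
  have hinj : ∀ a b : ℕ, a < n → b < n → (π ^ a) (0 : Fin n) = (π ^ b) 0 → a = b := by
    have key : ∀ a b : ℕ, a ≤ b → b < n → (π ^ a) (0 : Fin n) = (π ^ b) 0 → a = b := by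
      intro a b hab hbn he
      have h2 : (π ^ (b - a)) ((π ^ a) (0 : Fin n)) = (π ^ a) 0 := by
        rw [← Equiv.Perm.mul_apply, ← pow_add, Nat.sub_add_cancel hab, ← he]
      have h3 : π ^ (b - a) = 1 := (hπ.1.pow_eq_one_iff' (hfix _)).2 h2
      have h4 : n ∣ b - a := horder ▸ orderOf_dvd_of_pow_eq_one h3
      have h5 : b - a = 0 := Nat.eq_zero_of_dvd_of_lt h4 (lt_of_le_of_lt (Nat.sub_le _ _) hbn) |>.symm ▸ rfl
      omega
    intro a b ha hb he
    rcases le_total a b with hab | hab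
    · exact key a b hab hb he
    · exact (key b a hab ha he.symm).symm
  -- distinctness
  have hkn : k - 1 ≠ n - 1 := by omega
  have hkl' : k - 1 ≠ ℓ - 1 := by omega
  have hln' : ℓ - 1 ≠ n - 1 := by omega
  have hd : ∀ a b : ℕ, a < n → b < n → a ≠ b → (π ^ a) (0 : Fin n) ≠ (π ^ b) 0 :=
    fun a b ha hb hne he => hne (hinj a b ha hb he)
  have pkn := hd (k-1) (n-1) (by omega) (by omega) hkn
  have pkl := hd (k-1) (ℓ-1) (by omega) (by omega) hkl'
  have pln := hd (ℓ-1) (n-1) (by omega) (by omega) hln'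
  -- inverse lemma: π⁻¹ (π^m 0) = π^(m-1) 0 for 1 ≤ m
  have hinv : ∀ m : ℕ, 1 ≤ m → π⁻¹ ((π ^ m) (0 : Fin n)) = (π ^ (m - 1)) 0 := by
    intro m hm
    have : π ^ m = π * π ^ (m - 1) := by
      rw [← pow_succ', Nat.sub_add_cancel hm]
    rw [this]
    simp
  ext x
  -- surjectivity: x = π^j 0 for some j < n
  obtain ⟨j, hj, rfl⟩ : ∃ j < n, (π ^ j) (0 : Fin n) = x := by
    have hsi : Function.Injective (fun j : Fin n => (π ^ (j : ℕ)) (0 : Fin n)) := by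
      intro a b he
      exact Fin.ext (hinj a b a.isLt b.isLt he)
    have hss := Finite.injective_iff_surjective.mp hsi
    obtain ⟨j, hj⟩ := hss x
    exact ⟨j, j.isLt, hj⟩
  simp only [Equiv.Perm.mul_apply]
  by_cases hjk : j = k - 1
  · subst hjk
    rw [hkσ, hinv ℓ (by omega), Equiv.swap_apply_left, Equiv.swap_apply_of_ne_of_ne pkl.symm pln]
  · by_cases hjl : j = ℓ - 1
    · subst hjl
      have hinv0 : π⁻¹ (0 : Fin n) = (π ^ (n - 1)) 0 := by
        have hh : π ((π ^ (n - 1)) (0 : Fin n)) = 0 := by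
          rw [← Equiv.Perm.mul_apply, ← pow_succ', Nat.sub_add_cancel hn1, hpow]; rfl
        rw [Equiv.Perm.inv_eq_iff_eq]; exact hh.symm
      rw [hlσ, hinv0, Equiv.swap_apply_right, Equiv.swap_apply_left]
    · by_cases hjn : j = n - 1
      · subst hjn
        rw [hnσ, hinv k hk1, Equiv.swap_apply_of_ne_of_ne pkn.symm pln.symm,
          Equiv.swap_apply_right]
      · -- generic case
        have hi := hgen (j + 1) (by omega) (by omega) (by omega) (by omega)
        rw [Nat.add_sub_cancel] at hi
        rw [hi, hinv (j + 1) (by omega), Nat.add_sub_cancel]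
        have hjk2 := hd j (k-1) hj (by omega) hjk
        have hjl2 := hd j (ℓ-1) hj (by omega) hjl
        have hjn2 := hd j (n-1) hj (by omega) hjn
        rw [Equiv.swap_apply_of_ne_of_ne hjk2 hjl2, Equiv.swap_apply_of_ne_of_ne hjk2 hjn2]
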